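/- For every real d > 1, any two closed balls in Euclidean 3-space with centers on the prolate ellipsoid E_d = {p : (p 0)²/d² + (p 1)² + (p 2)² = 1}, which are non-overlapping (distance between centers at least the sum of radii) and neither of which contains the origin, do not generate the shadow at the origin: there exists a nonzero vector v such that the line {t • v : t ∈ ℝ} intersects neither ball. -/

import Mathlib

open Metric

/-- Two non-overlapping closed balls with centers on a prolate ellipsoid,
neither containing the origin, do not generate the shadow at the origin. -/
theorem two_closed_balls_no_shadow_at_ellipsoid_center
    (d : ℝ) (hd : 1 < d)
    (a : Fin 2 → EuclideanSpace ℝ (Fin 3)) (r : Fin 2 → ℝ)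
    (ha : ∀ i, (a i 0) ^ 2 / d ^ 2 + (a i 1) ^ 2 + (a i 2) ^ 2 = 1)
    (hsep : ∀ i j, i ≠ j → r i + r j ≤ dist (a i) (a j))
    (h0 : ∀ i, (0 : EuclideanSpace ℝ (Fin 3)) ∉ Metric.closedBall (a i) (r i)) :
    ∃ v : EuclideanSpace ℝ (Fin 3), v ≠ 0 ∧
      ∀ (t : ℝ) (i : Fin 2), t • v ∉ Metric.closedBall (a i) (r i) := by
  set K : Submodule ℝ (EuclideanSpace ℝ (Fin 3)) := Submodule.span ℝ {a 0, a 1} with hK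
  have hfin : Module.finrank ℝ K ≤ 2 := by
    haveI : Fintype ↑({a 0, a 1} : Set (EuclideanSpace ℝ (Fin 3))) :=
      (Set.toFinite _).fintype
    have h1 := finrank_span_le_card (R := ℝ) ({a 0, a 1} : Set (EuclideanSpace ℝ (Fin 3)))
    refine h1.trans ?_
    rw [← Set.ncard_eq_toFinset_card']
    simpa using Set.ncard_insert_le (a 0) {a 1}
  have hKne : Kᗮ ≠ ⊥ := by
    intro h
    have hKtop : K = ⊤ := Submodule.orthogonal_eq_bot_iff.mp h
    rw [hKtop] at hfin
    rw [finrank_top] at hfin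
    have h3 : Module.finrank ℝ (EuclideanSpace ℝ (Fin 3)) = 3 := by simp
    omega
  obtain ⟨v, hvK, hv0⟩ := Submodule.exists_mem_ne_zero_of_ne_bot hKne
  refine ⟨v, hv0, fun t i hmem => ?_⟩
  have hinner : (inner ℝ v (a i) : ℝ) = 0 := by
    rw [real_inner_comm]
    apply hvK
    fin_cases i
    · exact Submodule.subset_span (by simp)
    · exact Submodule.subset_span (by simp)
  have hra : r i < ‖a i‖ := by
    have := h0 i
    simp only [Metric.mem_closedBall, dist_zero_left, not_le] at this
    simpa [dist_eq_norm] using this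
  have hdist : dist (t • v) (a i) ≤ r i := hmem
  have hsq : ‖t • v - a i‖ ^ 2 = ‖t • v‖ ^ 2 + ‖a i‖ ^ 2 := by
    have := norm_sub_sq_real (t • v) (a i)
    rw [inner_smul_left] at this
    simp [hinner] at this
    linarith [this]
  have h1 : ‖a i‖ ^ 2 ≤ ‖t • v - a i‖ ^ 2 := by nlinarith [sq_nonneg ‖t • v‖]
  have h2 : ‖a i‖ ≤ ‖t • v - a i‖ := by
    nlinarith [norm_nonneg (t • v - a i), norm_nonneg (a i)]
  rw [dist_eq_norm] at hdist
  linarith
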